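/- Let Σ=(X,𝒰,φ) be a time-varying control system satisfying the BIC property. Suppose there exist a continuous function V:ℝ≥0×X→ℝ≥0 with V(t,0)=0 for all t≥0, functions α₁,α₂∈𝒦∞, κ∈𝒦 and a positive definite function μ∈𝒫 such that α₁(‖x‖_X) ≤ V(t,x) ≤ α₂(‖x‖_X) for all t≥0 and x∈X, and such that for all t≥0, x∈X and u∈𝒰: if ‖x‖_X ≥ κ(‖u‖_𝒰) then the Lie derivative satisfies V̇_u(t,x) ≤ −μ(V(t,x)). Then Σ is input-to-state stable (ISS): it is forward complete and there exist β∈𝒦ℒ and γ∈𝒦 such that ‖φ(t,t₀,x₀,u)‖_X ≤ β(‖x₀‖_X, t−t₀) + γ(‖u‖_𝒰) for all x₀∈X, u∈𝒰 and t≥t₀≥0. -/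

import Mathlib

open Filter Topology Set MeasureTheory
open scoped RealInnerProductSpace

noncomputable section

/-- Class `𝒦`: continuous, strictly increasing on `[0,∞)`, vanishing at `0`. -/
structure ClassK (g : ℝ → ℝ) : Prop where
  cont : ContinuousOn g (Set.Ici 0)
  mono : StrictMonoOn g (Set.Ici 0)
  zero : g 0 = 0
  nonneg : ∀ r : ℝ, 0 ≤ r → 0 ≤ g r

/-- Class `𝒦∞`: unbounded class-`𝒦` functions. -/
structure ClassKInf (g : ℝ → ℝ) : Prop where
  toClassK : ClassK g
  unbounded : ∀ M : ℝ, ∃ r : ℝ, 0 ≤ r ∧ M < g r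

/-- Class `𝒫`: positive definite functions. -/
structure ClassPD (g : ℝ → ℝ) : Prop where
  cont : ContinuousOn g (Set.Ici 0)
  zero : g 0 = 0
  pos : ∀ r : ℝ, 0 < r → 0 < g r

/-- Class `𝒦ℒ`. -/
structure ClassKL (b : ℝ → ℝ → ℝ) : Prop where
  classK : ∀ t : ℝ, 0 ≤ t → ClassK (fun r => b r t)
  contL : ∀ r : ℝ, 0 < r → ContinuousOn (fun t => b r t) (Set.Ici 0)
  antiL : ∀ r : ℝ, 0 < r → StrictAntiOn (fun t => b r t) (Set.Ici 0)
  tendstoL : ∀ r : ℝ, 0 < r → Tendsto (fun t => b r t) atTop (nhds 0)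

/-- An abstract time-varying control system `Σ = (X, 𝒰, φ)`:
inputs are functions `ℝ → U` from an admissible set, with a norm `unorm`;
`tm t0 x0 u ∈ (t0,∞]` is the maximal existence time and `phi` the transition map.
The axioms are shift invariance of inputs, the identity property, causality,
continuity of trajectories and the cocycle property. -/
structure TVSystem (X : Type*) (U : Type*) [NormedAddCommGroup X] [NormedAddCommGroup U] where
  inputs : Set (ℝ → U)
  unorm : (ℝ → U) → ℝ
  tm : ℝ → X → (ℝ → U) → EReal
  phi : ℝ → ℝ → X → (ℝ → U) → X
  unorm_nonneg : ∀ u, 0 ≤ unorm u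
  shift_invariant : ∀ u ∈ inputs, ∀ τ : ℝ, 0 ≤ τ →
    (fun s => u (s + τ)) ∈ inputs ∧ unorm (fun s => u (s + τ)) ≤ unorm u
  tm_gt : ∀ t0 : ℝ, 0 ≤ t0 → ∀ x0 u, (t0 : EReal) < tm t0 x0 u
  identity : ∀ t0 : ℝ, 0 ≤ t0 → ∀ x0 u, phi t0 t0 x0 u = x0
  causality : ∀ t0 : ℝ, 0 ≤ t0 → ∀ x0, ∀ u ∈ inputs, ∀ v ∈ inputs, ∀ t : ℝ, t0 ≤ t →
    (t : EReal) < tm t0 x0 u → (∀ s : ℝ, t0 ≤ s → s < t → u s = v s) →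
    (t : EReal) < tm t0 x0 v ∧ phi t t0 x0 u = phi t t0 x0 v
  trajCont : ∀ t0 : ℝ, 0 ≤ t0 → ∀ x0 u, ContinuousOn (fun t => phi t t0 x0 u)
    {t : ℝ | t0 ≤ t ∧ (t : EReal) < tm t0 x0 u}
  cocycle : ∀ t0 : ℝ, 0 ≤ t0 → ∀ x0 u, ∀ t : ℝ, t0 ≤ t → (t : EReal) < tm t0 x0 u →
    ∀ τ : ℝ, t0 ≤ τ → τ ≤ t → phi t τ (phi τ t0 x0 u) u = phi t t0 x0 u

namespace TVSystem

variable {X U : Type*} [NormedAddCommGroup X] [NormedAddCommGroup U]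

/-- Boundedness-implies-continuation property. -/
def BIC (S : TVSystem X U) : Prop :=
  ∀ t0 : ℝ, 0 ≤ t0 → ∀ x0 : X, ∀ u ∈ S.inputs, S.tm t0 x0 u ≠ ⊤ →
    ∀ M : ℝ, 0 < M → ∃ t : ℝ, t0 ≤ t ∧ (t : EReal) < S.tm t0 x0 u ∧ M < ‖S.phi t t0 x0 u‖

/-- Forward completeness. -/
def ForwardComplete (S : TVSystem X U) : Prop :=
  ∀ t0 : ℝ, 0 ≤ t0 → ∀ x0 : X, ∀ u ∈ S.inputs, S.tm t0 x0 u = ⊤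

/-- Input-to-state stability. -/
def ISS (S : TVSystem X U) : Prop :=
  S.ForwardComplete ∧ ∃ β : ℝ → ℝ → ℝ, ∃ γ : ℝ → ℝ, ClassKL β ∧ ClassK γ ∧
    ∀ t0 : ℝ, 0 ≤ t0 → ∀ x0 : X, ∀ u ∈ S.inputs, ∀ t : ℝ, t0 ≤ t →
      ‖S.phi t t0 x0 u‖ ≤ β ‖x0‖ (t - t0) + γ (S.unorm u)

/-- Integral input-to-state stability. -/
def iISS (S : TVSystem X U) : Prop :=
  S.ForwardComplete ∧ ∃ α : ℝ → ℝ, ∃ μ : ℝ → ℝ, ∃ β : ℝ → ℝ → ℝ,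
    ClassKInf α ∧ ClassK μ ∧ ClassKL β ∧
    ∀ t0 : ℝ, 0 ≤ t0 → ∀ x0 : X, ∀ u ∈ S.inputs, ∀ t : ℝ, t0 ≤ t →
      ‖S.phi t t0 x0 u‖ ≤ β ‖x0‖ (t - t0) + α (∫ s in t0..t, μ ‖u s‖)

/-- Input-to-state practical stability. -/
def ISpS (S : TVSystem X U) : Prop :=
  S.ForwardComplete ∧ ∃ β : ℝ → ℝ → ℝ, ∃ γ : ℝ → ℝ, ∃ r : ℝ,
    ClassKL β ∧ ClassK γ ∧ 0 < r ∧
    ∀ t0 : ℝ, 0 ≤ t0 → ∀ x0 : X, ∀ u ∈ S.inputs, ∀ t : ℝ, t0 ≤ t →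
      ‖S.phi t t0 x0 u‖ ≤ β ‖x0‖ (t - t0) + γ (S.unorm u) + r

/-- Completely practical uniform asymptotic gain property. -/
def CpUAG (S : TVSystem X U) : Prop :=
  ∃ β : ℝ → ℝ → ℝ, ∃ γ : ℝ → ℝ, ∃ c cs : ℝ,
    ClassKL β ∧ ClassK γ ∧ 0 < c ∧ 0 < cs ∧
    ∀ t0 : ℝ, 0 ≤ t0 → ∀ x0 : X, ∀ u ∈ S.inputs, ∀ t : ℝ, t0 ≤ t →
      ‖S.phi t t0 x0 u‖ ≤ β (‖x0‖ + c) (t - t0) + γ (S.unorm u) + cs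

/-- Lie (Dini) derivative of `V` along the trajectories of the system. -/
def lieDeriv (S : TVSystem X U) (V : ℝ → X → ℝ) (u : ℝ → U) (t : ℝ) (x : X) : ℝ :=
  Filter.limsup (fun h => (V (t + h) (S.phi (t + h) t x u) - V t x) / h)
    (nhdsWithin 0 (Set.Ioi 0))

end TVSystem



/-- Fencing lemma with slope hypothesis only at contact points. -/
theorem fence_contact {f : ℝ → ℝ} {a b : ℝ}
    (hf : ContinuousOn f (Icc a b))
    {B B' : ℝ → ℝ} (ha : f a ≤ B a) (hB : ContinuousOn B (Icc a b))
    (hB' : ∀ x ∈ Ico a b, HasDerivWithinAt B (B' x) (Ici x) x)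
    (bound : ∀ x ∈ Ico a b, f x = B x →
      ∃ r', r' < B' x ∧ ∀ r, r' < r → ∃ᶠ z in 𝓝[>] x, slope f x z < r) :
    ∀ ⦃x⦄, x ∈ Icc a b → f x ≤ B x := by
  change Icc a b ⊆ { x | f x ≤ B x }
  set s := { x | f x ≤ B x } ∩ Icc a b
  have A : ContinuousOn (fun x => (f x, B x)) (Icc a b) := hf.prodMk hB
  have : IsClosed s := by
    simp only [s, inter_comm]
    exact A.preimage_isClosed_of_isClosed isClosed_Icc OrderClosedTopology.isClosed_le'
  apply this.Icc_subset_of_forall_exists_gt ha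
  rintro x ⟨hxB : f x ≤ B x, xab⟩ y hy
  cases' hxB.lt_or_eq with hxB hxB
  · refine nonempty_of_mem (inter_mem ?_ (Ioc_mem_nhdsGT_of_mem ⟨le_rfl, hy⟩))
    have : ∀ᶠ x in 𝓝[Icc a b] x, f x < B x :=
      A x (Ico_subset_Icc_self xab) (IsOpen.mem_nhds (isOpen_lt continuous_fst continuous_snd) hxB)
    have : ∀ᶠ x in 𝓝[>] x, f x < B x := nhdsWithin_le_of_mem (Icc_mem_nhdsGT_of_mem xab) this
    exact this.mono fun y => le_of_lt
  · obtain ⟨r', hr'B, hf'⟩ := bound x xab hxB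
    rcases exists_between hr'B with ⟨r, hfr, hrB⟩
    specialize hf' r hfr
    have HB : ∀ᶠ z in 𝓝[>] x, r < slope B x z :=
      (hasDerivWithinAt_iff_tendsto_slope' <| lt_irrefl x).1 (hB' x xab).Ioi_of_Ici
        (Ioi_mem_nhds hrB)
    obtain ⟨z, hfz, hzB, hz⟩ : ∃ z, slope f x z < r ∧ r < slope B x z ∧ z ∈ Ioc x y :=
      (hf'.and_eventually (HB.and (Ioc_mem_nhdsGT_of_mem ⟨le_rfl, hy⟩))).exists
    refine ⟨z, ?_, hz⟩
    have := (hfz.trans hzB).le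
    rwa [slope_def_field, slope_def_field, div_le_div_iff_of_pos_right (sub_pos.2 hz.1), hxB,
      sub_le_sub_iff_right] at this

/-- From `limsup f ≤ c < 0` (possibly junk values) deduce frequent smallness. -/
theorem freq_lt_of_limsup_le {α : Type*} {l : Filter α} [l.NeBot] {f : α → ℝ} {c : ℝ}
    (h : Filter.limsup f l ≤ c) (hc : c < 0) {r : ℝ} (hr : c < r) :
    ∃ᶠ z in l, f z < r := by
  have hls : Filter.limsup f l = sInf {a : ℝ | ∀ᶠ n in l, f n ≤ a} := Filter.limsup_eq
  rcases Set.eq_empty_or_nonempty ({a : ℝ | ∀ᶠ n in l, f n ≤ a}) with hS | hS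
  · exfalso
    rw [hls, hS, Real.sInf_empty] at h
    exact absurd (h.trans_lt hc) (lt_irrefl 0)
  · by_cases hb : ∃ a ∈ {a : ℝ | ∀ᶠ n in l, f n ≤ a}, a < r
    · obtain ⟨a, haS, har⟩ := hb
      exact (haS.mono fun z hz => lt_of_le_of_lt hz har).frequently
    · push_neg at hb
      have : r ≤ Filter.limsup f l := hls ▸ le_csInf hS hb
      exact absurd ((this.trans h).trans_lt hr) (lt_irrefl r)

/-- extension of a class K function to all of ℝ. -/
noncomputable def kext (g : ℝ → ℝ) : ℝ → ℝ := fun r => if r < 0 then r else g r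

theorem kext_of_nonneg {g : ℝ → ℝ} {r : ℝ} (hr : 0 ≤ r) : kext g r = g r := by
  simp [kext, not_lt.2 hr]

theorem kext_strictMono {g : ℝ → ℝ} (hg : ClassK g) : StrictMono (kext g) := by
  intro x y hxy
  rcases lt_or_ge x 0 with hx | hx
  · rcases lt_or_ge y 0 with hy | hy
    · simpa [kext, hx, hy] using hxy
    · have : g y ≥ 0 := hg.nonneg y hy
      simp only [kext, if_pos hx, if_neg (not_lt.2 hy)]
      linarith
  · have hy : (0:ℝ) ≤ y := le_trans hx hxy.le
    simp only [kext, if_neg (not_lt.2 hx), if_neg (not_lt.2 hy)]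
    exact hg.mono hx hy hxy

theorem kext_surjective {g : ℝ → ℝ} (hg : ClassKInf g) : Function.Surjective (kext g) := by
  intro y
  rcases lt_or_ge y 0 with hy | hy
  · exact ⟨y, by simp [kext, hy]⟩
  · obtain ⟨R, hR0, hRy⟩ := hg.unbounded y
    have hy' : y ∈ Icc (g 0) (g R) := ⟨by rw [hg.toClassK.zero]; exact hy, hRy.le⟩
    have hc : ContinuousOn g (Icc 0 R) := hg.toClassK.cont.mono (Icc_subset_Ici_self)
    obtain ⟨r, hr, hgr⟩ := intermediate_value_Icc hR0 hc hy'
    exact ⟨r, by rw [kext_of_nonneg hr.1, hgr]⟩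

/-- the order isomorphism extending a class K∞ function. -/
noncomputable def kiso {g : ℝ → ℝ} (hg : ClassKInf g) : ℝ ≃o ℝ :=
  StrictMono.orderIsoOfSurjective (kext g) (kext_strictMono hg.toClassK) (kext_surjective hg)

theorem kiso_apply {g : ℝ → ℝ} (hg : ClassKInf g) (r : ℝ) : kiso hg r = kext g r := rfl

/-- generalized inverse. -/
noncomputable def kinv {g : ℝ → ℝ} (hg : ClassKInf g) : ℝ → ℝ := fun y => (kiso hg).symm y

theorem kinv_kapp {g : ℝ → ℝ} (hg : ClassKInf g) {r : ℝ} (hr : 0 ≤ r) :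
    kinv hg (g r) = r := by
  have : kiso hg r = g r := by rw [kiso_apply, kext_of_nonneg hr]
  rw [kinv, ← this, OrderIso.symm_apply_apply]

theorem kinv_zero {g : ℝ → ℝ} (hg : ClassKInf g) : kinv hg 0 = 0 := by
  simpa [hg.toClassK.zero] using kinv_kapp hg (le_refl 0)

theorem kinv_mono {g : ℝ → ℝ} (hg : ClassKInf g) : Monotone (kinv hg) :=
  (kiso hg).symm.monotone

theorem kinv_strictMono {g : ℝ → ℝ} (hg : ClassKInf g) : StrictMono (kinv hg) :=
  (kiso hg).symm.strictMono

theorem kinv_nonneg {g : ℝ → ℝ} (hg : ClassKInf g) {y : ℝ} (hy : 0 ≤ y) : 0 ≤ kinv hg y := by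
  simpa [kinv_zero hg] using kinv_mono hg hy

theorem kinv_continuous {g : ℝ → ℝ} (hg : ClassKInf g) : Continuous (kinv hg) :=
  (kiso hg).symm.continuous

theorem le_kinv_of_app_le {g : ℝ → ℝ} (hg : ClassKInf g) {x y : ℝ} (hx : 0 ≤ x)
    (h : g x ≤ y) : x ≤ kinv hg y := by
  have := kinv_mono hg h
  rwa [kinv_kapp hg hx] at this

/-- No increase above level `c > θ`. -/
theorem CL1 {g μ : ℝ → ℝ} {a b θ c : ℝ}
    (hg : ContinuousOn g (Icc a b))
    (Hd : ∀ x ∈ Ico a b, θ < g x → ∀ r, -(μ (g x)) < r → ∃ᶠ z in 𝓝[>] x, slope g x z < r)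
    (hθc : θ < c) (hμpos : ∀ s, c ≤ s → 0 < μ s) :
    ∀ x ∈ Icc a b, g x ≤ max (g a) c := by
  intro x hx
  refine fence_contact hg (B := fun _ => max (g a) c) (B' := fun _ => 0)
    (le_max_left _ _) continuousOn_const (fun y _ => hasDerivWithinAt_const _ _ _) ?_ hx
  intro y hy hyc
  have hcy : c ≤ g y := hyc ▸ le_max_right _ _
  have hθy : θ < g y := lt_of_lt_of_le hθc hcy
  exact ⟨-(μ (g y)), by simpa using hμpos _ hcy, Hd y hy hθy⟩

/-- Linear decay at rate `m` while between levels `c` and `M`. -/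
theorem CL2 {g μ : ℝ → ℝ} {a b θ c m M : ℝ}
    (hg : ContinuousOn g (Icc a b)) (hab : a ≤ b)
    (Hd : ∀ x ∈ Ico a b, θ < g x → ∀ r, -(μ (g x)) < r → ∃ᶠ z in 𝓝[>] x, slope g x z < r)
    (hθc : θ < c) (hga : g a ≤ M) (hm0 : 0 ≤ m)
    (hm : ∀ s, c ≤ s → s ≤ M → m < μ s)
    (hbc : c ≤ M - m * (b - a)) :
    ∀ x ∈ Icc a b, g x ≤ M - m * (x - a) := by
  intro x hx
  have hB' : ∀ y ∈ Ico a b, HasDerivWithinAt (fun t => M - m * (t - a)) (-m) (Ici y) y := by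
    intro y _
    have h1 : HasDerivAt (fun t : ℝ => m * (t - a)) (m * 1) y :=
      ((hasDerivAt_id y).sub_const a).const_mul m
    have h2 : HasDerivAt (fun t : ℝ => M - m * (t - a)) (0 - m * 1) y :=
      (hasDerivAt_const y M).sub h1
    simpa using h2.hasDerivWithinAt
  refine fence_contact hg (B := fun t => M - m * (t - a)) (B' := fun _ => -m)
    (by simpa using hga) (by fun_prop) hB' ?_ hx
  intro y hy hyc
  have hyb : y ≤ b := hy.2.le
  have hyc' : g y = M - m * (y - a) := hyc
  have hcy : c ≤ g y := by nlinarith [hy.1, hy.2.le]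
  have hyM : g y ≤ M := by nlinarith [hy.1]
  have hθy : θ < g y := lt_of_lt_of_le hθc hcy
  exact ⟨-(μ (g y)), by simpa using hm _ hcy hyM, Hd y hy hθy⟩

/-- Above the threshold the function never exceeds `max (g a) θ`. -/
theorem cap_claim {g μ : ℝ → ℝ} {a θ : ℝ}
    (hg : ∀ d, a ≤ d → ContinuousOn g (Icc a d))
    (Hd : ∀ x, a ≤ x → θ < g x → ∀ r, -(μ (g x)) < r → ∃ᶠ z in 𝓝[>] x, slope g x z < r)
    (hθ : 0 ≤ θ) (hμpos : ∀ s, 0 < s → 0 < μ s) :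
    ∀ x, a ≤ x → g x ≤ max (g a) θ := by
  intro x hx
  by_contra hcon
  push_neg at hcon
  set c : ℝ := (max (g a) θ + g x) / 2 with hc
  have hθc : θ < c := by
    have := le_max_right (g a) θ
    simp only [hc]; linarith
  have hcx : c < g x := by
    have := le_max_left (g a) θ
    simp only [hc]; linarith
  have := CL1 (b := x) (hg x hx)
    (fun y hy => Hd y hy.1) hθc
    (fun s hs => hμpos s (lt_of_lt_of_le (lt_of_le_of_lt hθ hθc) hs))
    x ⟨hx, le_refl x⟩
  have hgac : g a ≤ c := by
    have := le_max_left (g a) θ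
    simp only [hc]; linarith
  rw [max_eq_right hgac] at this
  linarith

/-- Quantified decay claim: with `v0 ≤ k` an upper bound for `g a`,
after time `τ` the value `g (a+τ) - θ` is below `max (1/k) (v0 - mk * τ)`. -/
theorem decay_claim {g μ : ℝ → ℝ} {a θ v0 k mk : ℝ}
    (hg : ∀ d, a ≤ d → ContinuousOn g (Icc a d))
    (Hd : ∀ x, a ≤ x → θ < g x → ∀ r, -(μ (g x)) < r → ∃ᶠ z in 𝓝[>] x, slope g x z < r)
    (hθ : 0 ≤ θ) (hμpos : ∀ s, 0 < s → 0 < μ s)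
    (hga : g a ≤ v0) (hk1 : 1 ≤ k) (hv0k : v0 ≤ k)
    (hmk : 0 < mk) (hmkμ : ∀ s, 1/k ≤ s → s ≤ k → mk < μ s) :
    ∀ τ, 0 ≤ τ → g (a + τ) - θ ≤ max (1/k) (v0 - mk * τ) := by
  have hk0 : 0 < k := lt_of_lt_of_le one_pos hk1
  have hkinvpos : 0 < 1/k := by positivity
  set L : ℝ := 1/k + θ with hL
  have hθL : θ < L := by simp only [hL]; linarith
  have hLpos : 0 < L := lt_of_le_of_lt hθ hθL
  have hμL : ∀ s, L ≤ s → 0 < μ s := fun s hs => hμpos s (lt_of_lt_of_le hLpos hs)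
  intro τ hτ
  by_cases hgaL : g a ≤ L
  · -- stays below L forever
    have h1 := CL1 (b := a + τ) (hg _ (by linarith))
      (fun y hy => Hd y hy.1) hθL hμL (a + τ) ⟨by linarith, le_refl _⟩
    rw [max_eq_right hgaL] at h1
    refine le_max_of_le_left ?_
    simp only [hL] at h1; linarith
  · push_neg at hgaL
    have hMk : g a ≤ k := le_trans hga hv0k
    have hmμ : ∀ s, L ≤ s → s ≤ g a → mk < μ s := fun s hs1 hs2 =>
      hmkμ s (le_trans (by simp only [hL]; linarith) hs1) (le_trans hs2 hMk)
    have hT0 : 0 < (g a - L)/mk := by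
      have : 0 < g a - L := by linarith
      positivity
    rcases le_or_gt τ ((g a - L)/mk) with hτT | hτT
    · have h2 := CL2 (b := a + τ) (hg _ (by linarith)) (by linarith)
        (fun y hy => Hd y hy.1) hθL (le_refl (g a)) hmk.le hmμ
        (by have h := (le_div_iff₀ hmk).1 hτT; linarith) (a + τ) ⟨by linarith, le_refl _⟩
      have h3 : g (a + τ) ≤ g a - mk * τ := by
        have : mk * (a + τ - a) = mk * τ := by ring
        linarith [this ▸ h2]
      refine le_max_of_le_right ?_
      linarith
    · -- reach level L at time T, then stay below
      have hTkey : mk * (a + (g a - L)/mk - a) = g a - L := by field_simp; ring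
      have h2 := CL2 (b := a + (g a - L)/mk) (hg _ (by linarith)) (by linarith)
        (fun y hy => Hd y hy.1) hθL (le_refl (g a)) hmk.le hmμ
        (by rw [hTkey]; linarith) (a + (g a - L)/mk) ⟨by linarith, le_refl _⟩
      have hgT : g (a + (g a - L)/mk) ≤ L := by rw [hTkey] at h2; linarith
      have h3 := CL1 (a := a + (g a - L)/mk) (b := a + τ)
        ((hg (a + τ) (by linarith)).mono (Icc_subset_Icc_left (by linarith)))
        (fun y hy => Hd y (by linarith [hy.1])) hθL hμL (a + τ) ⟨by linarith, le_refl _⟩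
      rw [max_eq_right hgT] at h3
      refine le_max_of_le_left ?_
      simp only [hL] at h3; linarith


theorem max_add_le' {x1 x2 y1 y2 d : ℝ} (h1 : x1 ≤ y1 + d) (h2 : x2 ≤ y2 + d) :
    max x1 x2 ≤ max y1 y2 + d :=
  max_le (h1.trans (by linarith [le_max_left y1 y2]))
    (h2.trans (by linarith [le_max_right y1 y2]))

theorem min_one_lip {x y d : ℝ} (h : x ≤ y + d) (hd : 0 ≤ d) :
    min 1 x ≤ min 1 y + d :=
  calc min 1 x ≤ min 1 (y + d) := min_le_min le_rfl h
    _ ≤ min (1 + d) (y + d) := min_le_min (by linarith) le_rfl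
    _ = min 1 y + d := min_add_add_right 1 y d

theorem max_zero_lip {x y d : ℝ} (h : x ≤ y + d) (hd : 0 ≤ d) :
    max x 0 ≤ max y 0 + d :=
  max_add_le' h (by linarith)

noncomputable def issRho (m : ℕ → ℝ) (n : ℕ) (v : ℝ) : ℝ :=
  min 1 (max ((n:ℝ) + 2 - v) 0 * (m (n+1) / m n))

noncomputable def issTerm (m : ℕ → ℝ) (n : ℕ) (v τ : ℝ) : ℝ :=
  max (1/((n:ℝ)+1)) (v - (m n * issRho m n v) * τ)

noncomputable def issG (m : ℕ → ℝ) (v τ : ℝ) : ℝ := ⨅ n : ℕ, issTerm m n v τ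

section issG
variable {m : ℕ → ℝ} {C : ℝ} (hm : ∀ n, 0 < m n) (hmC : ∀ n, m n ≤ C)

include hm in
theorem issRho_nonneg (n : ℕ) (v : ℝ) : 0 ≤ issRho m n v :=
  le_min one_pos.le (mul_nonneg (le_max_right _ _) (div_pos (hm (n+1)) (hm n)).le)

theorem issRho_le_one (n : ℕ) (v : ℝ) : issRho m n v ≤ 1 := min_le_left _ _

include hm in
theorem issRho_lip (n : ℕ) (v v' : ℝ) :
    issRho m n v ≤ issRho m n v' + (m (n+1) / m n) * |v - v'| := by
  have hq : 0 < m (n+1) / m n := div_pos (hm (n+1)) (hm n)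
  have habs : 0 ≤ |v - v'| := abs_nonneg _
  have h1 : max ((n:ℝ) + 2 - v) 0 ≤ max ((n:ℝ) + 2 - v') 0 + |v - v'| := by
    refine max_zero_lip ?_ habs
    have : v' - v ≤ |v - v'| := by rw [abs_sub_comm]; exact le_abs_self _
    linarith
  refine min_one_lip ?_ (by positivity)
  calc max ((n:ℝ) + 2 - v) 0 * (m (n+1) / m n)
      ≤ (max ((n:ℝ) + 2 - v') 0 + |v - v'|) * (m (n+1) / m n) :=
        mul_le_mul_of_nonneg_right h1 hq.le
    _ = max ((n:ℝ) + 2 - v') 0 * (m (n+1) / m n) + (m (n+1) / m n) * |v - v'| := by ring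

include hm in
theorem issRho_anti (n : ℕ) {v v' : ℝ} (h : v ≤ v') : issRho m n v' ≤ issRho m n v := by
  have hq : 0 < m (n+1) / m n := div_pos (hm (n+1)) (hm n)
  exact min_le_min le_rfl (mul_le_mul_of_nonneg_right
    (max_le_max (by linarith) le_rfl) hq.le)

theorem issTerm_nonneg (n : ℕ) (v τ : ℝ) : 0 ≤ issTerm m n v τ :=
  le_trans (by positivity : (0:ℝ) ≤ 1/((n:ℝ)+1)) (le_max_left _ _)

theorem issG_bddBelow (v τ : ℝ) : BddBelow (Set.range fun n => issTerm m n v τ) :=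
  ⟨0, by rintro x ⟨n, rfl⟩; exact issTerm_nonneg n v τ⟩

theorem issG_nonneg (v τ : ℝ) : 0 ≤ issG m v τ :=
  le_ciInf fun n => issTerm_nonneg n v τ

theorem issG_le_term (n : ℕ) (v τ : ℝ) : issG m v τ ≤ issTerm m n v τ :=
  ciInf_le (issG_bddBelow v τ) n

include hm hmC in
theorem issTerm_lip_v (n : ℕ) {τ : ℝ} (hτ : 0 ≤ τ) (v v' : ℝ) :
    issTerm m n v τ ≤ issTerm m n v' τ + (1 + C * τ) * |v - v'| := by
  have hC : 0 ≤ C := le_trans (hm 0).le (hmC 0)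
  have habs : 0 ≤ |v - v'| := abs_nonneg _
  have hd : 0 ≤ (1 + C * τ) * |v - v'| := by positivity
  refine max_add_le' (by linarith) ?_
  have h1 : issRho m n v' ≤ issRho m n v + (m (n+1)/ m n) * |v' - v| := issRho_lip hm n v' v
  have hvv : v ≤ v' + |v - v'| := by
    have := le_abs_self (v - v'); linarith
  have h2 : m n * issRho m n v' * τ ≤ m n * issRho m n v * τ + m (n+1) * |v - v'| * τ := by
    have := mul_le_mul_of_nonneg_left h1 (hm n).le
    have hmul := mul_le_mul_of_nonneg_right this hτ
    have heq : m n * ((m (n+1)/ m n) * |v' - v|) = m (n+1) * |v - v'| := by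
      rw [abs_sub_comm]; field_simp [(hm n).ne']
    nlinarith [hmul, heq]
  have h3 : m (n+1) * |v - v'| * τ ≤ C * τ * |v - v'| := by
    have := mul_le_mul_of_nonneg_right (mul_le_mul_of_nonneg_right (hmC (n+1)) habs) hτ
    nlinarith
  nlinarith [h2, h3, hvv]

include hm hmC in
theorem issTerm_lip_t (n : ℕ) (v : ℝ) (τ τ' : ℝ) :
    issTerm m n v τ ≤ issTerm m n v τ' + C * |τ - τ'| := by
  have hC : 0 ≤ C := le_trans (hm 0).le (hmC 0)
  have hd : 0 ≤ C * |τ - τ'| := by positivity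
  refine max_add_le' (by linarith) ?_
  have hrate0 : 0 ≤ m n * issRho m n v := mul_nonneg (hm n).le (issRho_nonneg hm n v)
  have hrateC : m n * issRho m n v ≤ C :=
    le_trans (mul_le_of_le_one_right (hm n).le (issRho_le_one n v)) (hmC n)
  have h1 : m n * issRho m n v * τ' - m n * issRho m n v * τ ≤ C * |τ - τ'| := by
    have habs : τ' - τ ≤ |τ - τ'| := by rw [abs_sub_comm]; exact le_abs_self _
    calc m n * issRho m n v * τ' - m n * issRho m n v * τ
        = m n * issRho m n v * (τ' - τ) := by ring
      _ ≤ m n * issRho m n v * |τ - τ'| := by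
          rcases le_total (τ' - τ) 0 with h | h
          · exact le_trans (mul_nonpos_of_nonneg_of_nonpos hrate0 h)
              (mul_nonneg hrate0 (abs_nonneg _))
          · exact mul_le_mul_of_nonneg_left habs hrate0
      _ ≤ C * |τ - τ'| := mul_le_mul_of_nonneg_right hrateC (abs_nonneg _)
  linarith

include hm hmC in
theorem issG_lip_v {τ : ℝ} (hτ : 0 ≤ τ) (v v' : ℝ) :
    issG m v τ ≤ issG m v' τ + (1 + C * τ) * |v - v'| := by
  simp only [issG]
  rw [ciInf_add (issG_bddBelow v' τ)]
  exact ciInf_mono (issG_bddBelow v τ) fun n => issTerm_lip_v hm hmC n hτ v v'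

include hm hmC in
theorem issG_lip_t (v : ℝ) (τ τ' : ℝ) :
    issG m v τ ≤ issG m v τ' + C * |τ - τ'| := by
  simp only [issG]
  rw [ciInf_add (issG_bddBelow v τ')]
  exact ciInf_mono (issG_bddBelow v τ) fun n => issTerm_lip_t hm hmC n v τ τ'

include hm in
theorem issG_mono_v {τ : ℝ} (hτ : 0 ≤ τ) {v v' : ℝ} (h : v ≤ v') :
    issG m v τ ≤ issG m v' τ := by
  refine ciInf_mono (issG_bddBelow v τ) fun n => ?_
  refine max_le_max le_rfl ?_
  have := mul_le_mul_of_nonneg_right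
    (mul_le_mul_of_nonneg_left (issRho_anti hm n h) (hm n).le) hτ
  linarith

include hm in
theorem issG_anti_t {v : ℝ} {τ τ' : ℝ} (h : τ ≤ τ') :
    issG m v τ' ≤ issG m v τ := by
  refine ciInf_mono (issG_bddBelow v τ') fun n => ?_
  refine max_le_max le_rfl ?_
  have hrate0 : 0 ≤ m n * issRho m n v := mul_nonneg (hm n).le (issRho_nonneg hm n v)
  nlinarith

include hm in
theorem issG_zero {τ : ℝ} (hτ : 0 ≤ τ) : issG m 0 τ = 0 := by
  refine le_antisymm ?_ (issG_nonneg 0 τ)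
  by_contra hcon
  push_neg at hcon
  obtain ⟨n, hn⟩ := exists_nat_gt (1 / issG m 0 τ)
  have hGpos : 0 < issG m 0 τ := hcon
  have hn' : 1/((n:ℝ)+1) < issG m 0 τ := by
    rw [div_lt_iff₀ (by positivity)]
    rw [div_lt_iff₀ hGpos] at hn
    nlinarith [hGpos]
  have hterm : issTerm m n 0 τ = 1/((n:ℝ)+1) := by
    rw [issTerm, max_eq_left]
    have hrate0 : 0 ≤ m n * issRho m n 0 := mul_nonneg (hm n).le (issRho_nonneg hm n 0)
    have h5 : (0:ℝ) < 1/((n:ℝ)+1) := by positivity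
    nlinarith
  have := issG_le_term (m := m) n 0 τ
  rw [hterm] at this
  linarith

include hm in
theorem issG_tendsto {v : ℝ} (hv : 0 ≤ v) :
    Tendsto (fun τ => issG m v τ) atTop (𝓝 0) := by
  rw [Metric.tendsto_atTop]
  intro ε hε
  obtain ⟨n₀, hn₀⟩ := exists_nat_gt (max (1/ε) v)
  set n : ℕ := n₀ with hn
  have hnv : v ≤ (n:ℝ) := le_trans (le_max_right _ _) hn₀.le
  have hnε : 1/((n:ℝ)+1) < ε := by
    have h1 : 1/ε < (n:ℝ) := lt_of_le_of_lt (le_max_left _ _) hn₀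
    rw [div_lt_iff₀ hε] at h1
    rw [div_lt_iff₀ (by positivity)]
    nlinarith
  have hq : 0 < m (n+1) / m n := div_pos (hm (n+1)) (hm n)
  have hrhopos : 0 < issRho m n v := by
    refine lt_min one_pos ?_
    have h2 : (1:ℝ) ≤ max ((n:ℝ) + 2 - v) 0 := le_max_of_le_left (by linarith)
    nlinarith
  have hratepos : 0 < m n * issRho m n v := mul_pos (hm n) hrhopos
  refine ⟨v / (m n * issRho m n v), fun τ hτ => ?_⟩
  have harm : v - m n * issRho m n v * τ ≤ 0 := by
    rw [ge_iff_le, div_le_iff₀ hratepos] at hτ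
    nlinarith
  have hterm : issTerm m n v τ = 1/((n:ℝ)+1) := by
    rw [issTerm, max_eq_left (le_trans harm (by positivity))]
  have h3 := issG_le_term (m := m) n v τ
  rw [hterm] at h3
  have h4 := issG_nonneg (m := m) v τ
  rw [Real.dist_eq, sub_zero, abs_of_nonneg h4]
  exact lt_of_le_of_lt h3 hnε

include hm hmC in
/-- Validity: if `y` obeys the claims, then `y ≤ issG m v τ`. -/
theorem issG_valid {v τ y : ℝ} (hv : 0 ≤ v) (hτ : 0 ≤ τ)
    (F1 : ∀ k : ℕ, v ≤ (k:ℝ) + 1 → y ≤ max (1/((k:ℝ)+1)) (v - m k * τ))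
    (F2 : y ≤ v) :
    y ≤ issG m v τ := by
  refine le_ciInf fun n => ?_
  have hq : 0 < m (n+1) / m n := div_pos (hm (n+1)) (hm n)
  rcases le_or_gt v ((n:ℝ)+1) with h1 | h1
  · refine (F1 n h1).trans (max_le_max le_rfl ?_)
    have : m n * issRho m n v ≤ m n := mul_le_of_le_one_right (hm n).le (issRho_le_one n v)
    nlinarith
  · rcases le_or_gt v ((n:ℝ)+2) with h2 | h2
    · have hF := F1 (n+1) (by push_cast; linarith)
      refine hF.trans (max_le_max ?_ ?_)
      · have h3 : ((n:ℝ)+1) ≤ ((n:ℝ)+1+1) := by linarith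
        push_cast
        rw [div_le_div_iff₀ (by positivity) (by positivity)]
        linarith
      · have hrho : issRho m n v ≤ ((n:ℝ) + 2 - v) * (m (n+1) / m n) := by
          refine le_trans (min_le_right _ _) ?_
          rw [max_eq_left (by linarith)]
        have hkey : m n * issRho m n v ≤ m (n+1) := by
          have := mul_le_mul_of_nonneg_left hrho (hm n).le
          have heq : m n * (((n:ℝ) + 2 - v) * (m (n+1) / m n)) = ((n:ℝ)+2-v) * m (n+1) := by
            field_simp [(hm n).ne']
            all_goals ring
          rw [heq] at this
          refine this.trans ?_
          nlinarith [(hm (n+1)).le]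
        push_cast
        nlinarith
    · have hrho : issRho m n v = 0 := by
        rw [issRho, max_eq_right (by linarith), zero_mul, min_eq_right one_pos.le]
      rw [issTerm, hrho]
      refine le_max_of_le_right ?_
      simpa using F2
end issG

section Traj
variable {X U : Type*} [NormedAddCommGroup X] [NormedAddCommGroup U]

/-- The frequent-slope property along trajectories above the threshold. -/
theorem traj_Hd (S : TVSystem X U) (V : ℝ → X → ℝ)
    (α₂ κ μ : ℝ → ℝ) (hα₂ : ClassKInf α₂) (hκ : ClassK κ)
    (hμpos : ∀ s : ℝ, 0 < s → 0 < μ s)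
    (hsand : ∀ t : ℝ, 0 ≤ t → ∀ x : X, V t x ≤ α₂ ‖x‖)
    (hdecay : ∀ t : ℝ, 0 ≤ t → ∀ x : X, ∀ u ∈ S.inputs,
      κ (S.unorm u) ≤ ‖x‖ → S.lieDeriv V u t x ≤ - μ (V t x))
    (t0 : ℝ) (ht0 : 0 ≤ t0) (x0 : X) (u : ℝ → U) (hu : u ∈ S.inputs)
    (x : ℝ) (hx : t0 ≤ x) (hxtm : (x : EReal) < S.tm t0 x0 u)
    (hθ : α₂ (κ (S.unorm u)) < V x (S.phi x t0 x0 u)) :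
    ∀ r : ℝ, -(μ (V x (S.phi x t0 x0 u))) < r →
      ∃ᶠ z in 𝓝[>] x, slope (fun t => V t (S.phi t t0 x0 u)) x z < r := by
  intro r hr
  set g : ℝ → ℝ := fun t => V t (S.phi t t0 x0 u) with hgdef
  set xp : X := S.phi x t0 x0 u with hxp
  have hx0 : (0:ℝ) ≤ x := le_trans ht0 hx
  have hκ0 : 0 ≤ κ (S.unorm u) := hκ.nonneg _ (S.unorm_nonneg u)
  have hxpnorm : κ (S.unorm u) < ‖xp‖ := by
    have h1 : V x xp ≤ α₂ ‖xp‖ := hsand x hx0 xp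
    have h2 : α₂ (κ (S.unorm u)) < α₂ ‖xp‖ := lt_of_lt_of_le hθ h1
    exact (hα₂.toClassK.mono.lt_iff_lt hκ0 (norm_nonneg xp)).1 h2
  have hlie : S.lieDeriv V u x xp ≤ -(μ (V x xp)) :=
    hdecay x hx0 xp u hu hxpnorm.le
  have hVpos : 0 < V x xp := by
    have hθ0 : 0 ≤ α₂ (κ (S.unorm u)) := hα₂.toClassK.nonneg _ hκ0
    exact lt_of_le_of_lt hθ0 hθ
  have hc : -(μ (V x xp)) < 0 := by simpa using hμpos _ hVpos
  have hfreq : ∃ᶠ h in 𝓝[>] (0:ℝ),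
      (V (x + h) (S.phi (x + h) x xp u) - V x xp) / h < r :=
    freq_lt_of_limsup_le hlie hc hr
  -- eventually x + h is in the maximal interval
  have hE1 : ∀ᶠ h in 𝓝[>] (0:ℝ), ((x + h : ℝ) : EReal) < S.tm t0 x0 u := by
    rcases eq_or_ne (S.tm t0 x0 u) ⊤ with htop | htop
    · exact Eventually.of_forall fun h => htop ▸ EReal.coe_lt_top _
    · have hbot : S.tm t0 x0 u ≠ ⊥ := fun hb => by
        rw [hb] at hxtm; exact absurd hxtm (by simp)
      set T : ℝ := (S.tm t0 x0 u).toReal with hT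
      have hTc : (T : EReal) = S.tm t0 x0 u := EReal.coe_toReal htop hbot
      have hxT : x < T := by
        rw [← EReal.coe_lt_coe_iff, hTc]; exact hxtm
      filter_upwards [Ioo_mem_nhdsGT_of_mem
        (⟨le_refl (0:ℝ), sub_pos.2 hxT⟩ : (0:ℝ) ∈ Ico (0:ℝ) (T - x))] with h hh
      rw [← hTc, EReal.coe_lt_coe_iff]
      linarith [hh.2]
  have hE2 : ∀ᶠ h in 𝓝[>] (0:ℝ), 0 < h := self_mem_nhdsWithin
  have hfreq2 : ∃ᶠ h in 𝓝[>] (0:ℝ), slope g x (x + h) < r := by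
    refine (hfreq.and_eventually (hE1.and hE2)).mono ?_
    rintro h ⟨hs, h1, h2⟩
    have hco : S.phi (x + h) x xp u = S.phi (x + h) t0 x0 u :=
      S.cocycle t0 ht0 x0 u (x + h) (by linarith) h1 x hx (by linarith)
    have : slope g x (x + h) = (V (x + h) (S.phi (x + h) x xp u) - V x xp) / h := by
      rw [slope_def_field, hco]
      simp only [hgdef, hxp, add_sub_cancel_left]
    rw [this]
    exact hs
  have hmap : Filter.map (fun h : ℝ => x + h) (𝓝[>] (0:ℝ)) = 𝓝[>] x := by
    have h1 := (Homeomorph.addLeft x).isEmbedding.map_nhdsWithin_eq (Ioi (0:ℝ)) 0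
    simpa [image_const_add_Ioi] using h1
  rw [← hmap, Filter.frequently_map]
  exact hfreq2

/-- Continuity of `t ↦ V t (φ t)` on compact subintervals of the maximal interval. -/
theorem traj_gcont (S : TVSystem X U) (V : ℝ → X → ℝ)
    (hVcont : ContinuousOn (fun p : ℝ × X => V p.1 p.2) (Set.Ici (0:ℝ) ×ˢ (Set.univ : Set X)))
    (t0 : ℝ) (ht0 : 0 ≤ t0) (x0 : X) (u : ℝ → U)
    (b : ℝ) (hb : (b : EReal) < S.tm t0 x0 u) :
    ContinuousOn (fun t => V t (S.phi t t0 x0 u)) (Icc t0 b) := by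
  have hsub : Icc t0 b ⊆ {t : ℝ | t0 ≤ t ∧ (t : EReal) < S.tm t0 x0 u} := by
    intro t ht
    exact ⟨ht.1, lt_of_le_of_lt (EReal.coe_le_coe_iff.2 ht.2) hb⟩
  have h1 : ContinuousOn (fun t : ℝ => (t, S.phi t t0 x0 u)) (Icc t0 b) :=
    continuousOn_id.prodMk ((S.trajCont t0 ht0 x0 u).mono hsub)
  refine hVcont.comp h1 ?_
  intro t ht
  exact ⟨le_trans ht0 ht.1, mem_univ _⟩

end Traj

/-- Existence of a coercive ISS Lyapunov function (in implication form) for a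
time-varying control system with the BIC property implies ISS. -/
theorem stmt0 {X U : Type*} [NormedAddCommGroup X] [NormedAddCommGroup U]
    (S : TVSystem X U) (hBIC : S.BIC)
    (V : ℝ → X → ℝ)
    (hVcont : ContinuousOn (fun p : ℝ × X => V p.1 p.2) (Set.Ici (0:ℝ) ×ˢ (Set.univ : Set X)))
    (hVnonneg : ∀ t : ℝ, 0 ≤ t → ∀ x : X, 0 ≤ V t x)
    (hV0 : ∀ t : ℝ, 0 ≤ t → V t 0 = 0)
    (α₁ α₂ : ℝ → ℝ) (hα₁ : ClassKInf α₁) (hα₂ : ClassKInf α₂)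
    (κ : ℝ → ℝ) (hκ : ClassK κ)
    (μ : ℝ → ℝ) (hμ : ClassPD μ)
    (hsand : ∀ t : ℝ, 0 ≤ t → ∀ x : X, α₁ ‖x‖ ≤ V t x ∧ V t x ≤ α₂ ‖x‖)
    (hdecay : ∀ t : ℝ, 0 ≤ t → ∀ x : X, ∀ u ∈ S.inputs,
      κ (S.unorm u) ≤ ‖x‖ → S.lieDeriv V u t x ≤ - μ (V t x)) :
    S.ISS := by
  have hκ0 : ∀ u, 0 ≤ κ (S.unorm u) := fun u => hκ.nonneg _ (S.unorm_nonneg u)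
  have hθ0 : ∀ u, 0 ≤ α₂ (κ (S.unorm u)) := fun u => hα₂.toClassK.nonneg _ (hκ0 u)
  have hsand2 : ∀ t : ℝ, 0 ≤ t → ∀ x : X, V t x ≤ α₂ ‖x‖ := fun t ht x => (hsand t ht x).2
  have hHd := traj_Hd S V α₂ κ μ hα₂ hκ hμ.pos hsand2 hdecay
  -- Forward completeness
  have hFC : S.ForwardComplete := by
    intro t0 ht0 x0 u hu
    by_contra htop
    set θ : ℝ := α₂ (κ (S.unorm u)) with hθdef
    set g : ℝ → ℝ := fun s => V s (S.phi s t0 x0 u) with hgdef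
    obtain ⟨R, hR0, hRC⟩ := hα₁.unbounded (max (g t0) (θ + 1))
    obtain ⟨te, hte0, htetm, hteR⟩ := hBIC t0 ht0 x0 u hu htop (R + 1) (by linarith)
    have hcl1 := CL1 (μ := μ) (a := t0) (b := te) (θ := θ) (c := θ + 1)
      (traj_gcont S V hVcont t0 ht0 x0 u te htetm)
      (fun x hx hgx r hr => hHd t0 ht0 x0 u hu x hx.1
        (lt_of_le_of_lt (EReal.coe_le_coe_iff.2 hx.2.le) htetm) hgx r hr)
      (by linarith)
      (fun s hs => hμ.pos s (lt_of_lt_of_le (lt_of_le_of_lt (hθ0 u) (by linarith)) hs))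
      te ⟨hte0, le_refl te⟩
    have hα₁g : α₁ ‖S.phi te t0 x0 u‖ ≤ g te := (hsand te (le_trans ht0 hte0) _).1
    have hnorm : R < ‖S.phi te t0 x0 u‖ := by linarith
    have hmono : α₁ R < α₁ ‖S.phi te t0 x0 u‖ :=
      hα₁.toClassK.mono hR0 (norm_nonneg _) hnorm
    have : α₁ ‖S.phi te t0 x0 u‖ ≤ max (g t0) (θ + 1) := le_trans hα₁g hcl1
    linarith
  -- minimum of μ over the compact intervals [1/(n+1), n+1]
  have hmex : ∀ n : ℕ, ∃ mk : ℝ, 0 < mk ∧ mk ≤ μ 1 / 2 ∧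
      ∀ s, 1/((n:ℝ)+1) ≤ s → s ≤ (n:ℝ)+1 → mk < μ s := by
    intro n
    have hn0 : (0:ℝ) ≤ (n:ℝ) := Nat.cast_nonneg n
    have hlow : (0:ℝ) < 1/((n:ℝ)+1) := by positivity
    have hle1 : 1/((n:ℝ)+1) ≤ 1 := by
      rw [div_le_one (by positivity)]; linarith
    have hone : (1:ℝ) ∈ Icc (1/((n:ℝ)+1)) ((n:ℝ)+1) := ⟨hle1, by linarith⟩
    have hcont : ContinuousOn μ (Icc (1/((n:ℝ)+1)) ((n:ℝ)+1)) :=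
      hμ.cont.mono (fun s hs => le_trans hlow.le hs.1)
    obtain ⟨p, hpI, hpmin⟩ := isCompact_Icc.exists_isMinOn ⟨1, hone⟩ hcont
    have hppos : 0 < μ p := hμ.pos p (lt_of_lt_of_le hlow hpI.1)
    refine ⟨μ p / 2, by linarith, ?_, ?_⟩
    · have h1 := (isMinOn_iff.1 hpmin) 1 hone
      linarith
    · intro s hs1 hs2
      have h2 := (isMinOn_iff.1 hpmin) s ⟨hs1, hs2⟩
      linarith
  choose mseq hmpos hmbd hmlt using hmex
  -- the gain functions
  set γ : ℝ → ℝ := fun s => kinv hα₁ (2 * α₂ (κ s)) with hγdef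
  set β : ℝ → ℝ → ℝ :=
    fun r t => kinv hα₁ (2 * issG mseq (α₂ r) t) + r * Real.exp (-t) with hβdef
  -- main estimate
  have hEST : ∀ t0 : ℝ, 0 ≤ t0 → ∀ x0 : X, ∀ u ∈ S.inputs, ∀ t : ℝ, t0 ≤ t →
      ‖S.phi t t0 x0 u‖ ≤ kinv hα₁ (2 * issG mseq (α₂ ‖x0‖) (t - t0)) + γ (S.unorm u) := by
    intro t0 ht0 x0 u hu t ht
    set θ : ℝ := α₂ (κ (S.unorm u)) with hθdef
    set g : ℝ → ℝ := fun s => V s (S.phi s t0 x0 u) with hgdef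
    set v0 : ℝ := α₂ ‖x0‖ with hv0def
    have hv00 : 0 ≤ v0 := hα₂.toClassK.nonneg _ (norm_nonneg x0)
    have htop : S.tm t0 x0 u = ⊤ := hFC t0 ht0 x0 u hu
    have hgc : ∀ d, t0 ≤ d → ContinuousOn g (Icc t0 d) := fun d _ =>
      traj_gcont S V hVcont t0 ht0 x0 u d (htop ▸ EReal.coe_lt_top d)
    have hHd' : ∀ x, t0 ≤ x → θ < g x → ∀ r, -(μ (g x)) < r →
        ∃ᶠ z in 𝓝[>] x, slope g x z < r :=
      fun x hx => hHd t0 ht0 x0 u hu x hx (htop ▸ EReal.coe_lt_top x)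
    have hga : g t0 ≤ v0 := by
      simp only [hgdef]
      rw [S.identity t0 ht0 x0 u]
      exact hsand2 t0 ht0 x0
    have hθ0' : 0 ≤ θ := hθ0 u
    set τ : ℝ := t - t0 with hτdef
    have hτ0 : 0 ≤ τ := by simp only [hτdef]; linarith
    have hcap : g (t0 + τ) ≤ max (g t0) θ :=
      cap_claim hgc hHd' hθ0' hμ.pos (t0 + τ) (by linarith)
    have hF2 : g (t0 + τ) - θ ≤ v0 := by
      rcases max_cases (g t0) θ with ⟨he, _⟩ | ⟨he, _⟩ <;> rw [he] at hcap <;> linarith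
    have hF1 : ∀ k : ℕ, v0 ≤ (k:ℝ)+1 →
        g (t0+τ) - θ ≤ max (1/((k:ℝ)+1)) (v0 - mseq k * τ) := by
      intro k hk
      have hk0 : (0:ℝ) ≤ (k:ℝ) := Nat.cast_nonneg k
      exact decay_claim hgc hHd' hθ0' hμ.pos hga (by linarith) hk
        (hmpos k) (hmlt k) τ hτ0
    have hvalid : g (t0 + τ) - θ ≤ issG mseq v0 τ :=
      issG_valid hmpos hmbd hv00 hτ0 hF1 hF2
    have ht0t : t0 + τ = t := by simp only [hτdef]; ring
    have hgt : g t ≤ issG mseq v0 τ + θ := by rw [← ht0t]; linarith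
    have hα₁g : α₁ ‖S.phi t t0 x0 u‖ ≤ g t := (hsand t (le_trans ht0 ht) _).1
    have hG0 : 0 ≤ issG mseq v0 τ := issG_nonneg v0 τ
    have h2max : g t ≤ 2 * max (issG mseq v0 τ) θ := by
      rcases le_total (issG mseq v0 τ) θ with h | h
      · rw [max_eq_right h]; linarith
      · rw [max_eq_left h]; linarith
    have hkey : ‖S.phi t t0 x0 u‖ ≤ kinv hα₁ (2 * max (issG mseq v0 τ) θ) :=
      le_kinv_of_app_le hα₁ (norm_nonneg _) (le_trans hα₁g h2max)
    have hmax2 : (2:ℝ) * max (issG mseq v0 τ) θ = max (2 * issG mseq v0 τ) (2 * θ) := by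
      rcases le_total (issG mseq v0 τ) θ with h | h
      · rw [max_eq_right h, max_eq_right (by linarith)]
      · rw [max_eq_left h, max_eq_left (by linarith)]
    have hsplit : kinv hα₁ (2 * max (issG mseq v0 τ) θ)
        ≤ kinv hα₁ (2 * issG mseq v0 τ) + kinv hα₁ (2 * θ) := by
      rw [hmax2, (kinv_mono hα₁).map_max]
      exact max_le (le_add_of_nonneg_right (kinv_nonneg hα₁ (by linarith)))
        (le_add_of_nonneg_left (kinv_nonneg hα₁ (by linarith)))
    exact le_trans hkey hsplit
  refine ⟨hFC, β, γ, ?_, ?_, ?_⟩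
  · -- ClassKL β
    have hCpos : 0 < μ 1 / 2 := by have := hμ.pos 1 one_pos; linarith
    have hGcont_v : ∀ t : ℝ, 0 ≤ t → Continuous (fun v => issG mseq v t) := by
      intro t ht
      have hK : 0 ≤ 1 + (μ 1 / 2) * t := by positivity
      refine (LipschitzWith.of_dist_le_mul
        (K := Real.toNNReal (1 + (μ 1 / 2) * t)) ?_).continuous
      intro v v'
      rw [Real.dist_eq, Real.dist_eq, Real.coe_toNNReal _ hK, abs_sub_le_iff]
      constructor
      · have h1 := issG_lip_v hmpos hmbd ht v v'
        linarith
      · have h1 := issG_lip_v hmpos hmbd ht v' v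
        rw [abs_sub_comm] at h1
        linarith
    have hGcont_t : ∀ v : ℝ, Continuous (fun t => issG mseq v t) := by
      intro v
      refine (LipschitzWith.of_dist_le_mul (K := Real.toNNReal (μ 1 / 2)) ?_).continuous
      intro t t'
      rw [Real.dist_eq, Real.dist_eq, Real.coe_toNNReal _ hCpos.le, abs_sub_le_iff]
      constructor
      · have h1 := issG_lip_t hmpos hmbd v t t'
        linarith
      · have h1 := issG_lip_t hmpos hmbd v t' t
        rw [abs_sub_comm] at h1
        linarith
    refine ⟨?_, ?_, ?_, ?_⟩
    · -- classK in the first argument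
      intro t ht
      refine ⟨?_, ?_, ?_, ?_⟩
      · have h2 : ContinuousOn (fun r => kinv hα₁ (2 * issG mseq (α₂ r) t)) (Ici 0) := by
          apply (kinv_continuous hα₁).comp_continuousOn
          exact (continuous_const.mul (hGcont_v t ht)).comp_continuousOn hα₂.toClassK.cont
        exact h2.add ((continuous_id.mul continuous_const).continuousOn)
      · intro r1 h1 r2 h2 h12
        simp only [hβdef]
        have hmono1 : kinv hα₁ (2 * issG mseq (α₂ r1) t)
            ≤ kinv hα₁ (2 * issG mseq (α₂ r2) t) := by
          apply kinv_mono hα₁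
          have h3 := issG_mono_v hmpos ht (le_of_lt (hα₂.toClassK.mono h1 h2 h12))
          linarith
        have hexp : r1 * Real.exp (-t) < r2 * Real.exp (-t) :=
          mul_lt_mul_of_pos_right h12 (Real.exp_pos _)
        linarith
      · simp only [hβdef, hα₂.toClassK.zero, issG_zero hmpos ht, mul_zero, zero_mul,
          kinv_zero hα₁, add_zero]
      · intro r hr
        have h1 : 0 ≤ kinv hα₁ (2 * issG mseq (α₂ r) t) :=
          kinv_nonneg hα₁ (by linarith [issG_nonneg (m := mseq) (α₂ r) t])
        have h2 : 0 ≤ r * Real.exp (-t) := mul_nonneg hr (Real.exp_nonneg _)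
        simp only [hβdef]
        linarith
    · -- continuity in the second argument
      intro r _
      have h2 : Continuous (fun t => kinv hα₁ (2 * issG mseq (α₂ r) t)) :=
        (kinv_continuous hα₁).comp (continuous_const.mul (hGcont_t (α₂ r)))
      exact (h2.add (continuous_const.mul (Real.continuous_exp.comp continuous_neg))).continuousOn
    · -- strict decrease in the second argument
      intro r hr t1 _ t2 _ h12
      simp only [hβdef]
      have hmono1 : kinv hα₁ (2 * issG mseq (α₂ r) t2)
          ≤ kinv hα₁ (2 * issG mseq (α₂ r) t1) := by
        apply kinv_mono hα₁
        have h3 := issG_anti_t (v := α₂ r) hmpos h12.le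
        linarith
      have hexp : r * Real.exp (-t2) < r * Real.exp (-t1) :=
        mul_lt_mul_of_pos_left (Real.exp_lt_exp.2 (by linarith)) hr
      linarith
    · -- decay in the second argument
      intro r hr
      have hv : 0 ≤ α₂ r := hα₂.toClassK.nonneg r hr.le
      have h1 : Tendsto (fun t => issG mseq (α₂ r) t) atTop (𝓝 0) := issG_tendsto hmpos hv
      have h2 : Tendsto (fun t => 2 * issG mseq (α₂ r) t) atTop (𝓝 0) := by
        simpa using h1.const_mul 2
      have h3 : Tendsto (fun t => kinv hα₁ (2 * issG mseq (α₂ r) t)) atTop (𝓝 0) := by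
        have h4 := ((kinv_continuous hα₁).tendsto 0).comp h2
        simpa [kinv_zero hα₁, Function.comp_def] using h4
      have h5 : Tendsto (fun t : ℝ => r * Real.exp (-t)) atTop (𝓝 0) := by
        simpa using (Real.tendsto_exp_neg_atTop_nhds_zero.const_mul r)
      simpa using h3.add h5
  · -- ClassK γ
    refine ⟨?_, ?_, ?_, ?_⟩
    · apply (kinv_continuous hα₁).comp_continuousOn
      have h0 : ContinuousOn (fun s => α₂ (κ s)) (Ici 0) :=
        hα₂.toClassK.cont.comp hκ.cont (fun s hs => hκ.nonneg s hs)
      exact continuousOn_const.mul h0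
    · intro s1 h1 s2 h2 h12
      apply kinv_strictMono hα₁
      have h3 := hα₂.toClassK.mono (hκ.nonneg s1 h1) (hκ.nonneg s2 h2) (hκ.mono h1 h2 h12)
      linarith
    · simp only [hγdef, hκ.zero, hα₂.toClassK.zero, mul_zero, kinv_zero hα₁]
    · intro s hs
      have h0 : 0 ≤ α₂ (κ s) := hα₂.toClassK.nonneg _ (hκ.nonneg s hs)
      exact kinv_nonneg hα₁ (by linarith)
  · intro t0 ht0 x0 u hu t ht
    have h := hEST t0 ht0 x0 u hu t ht
    have hpos : 0 ≤ ‖x0‖ * Real.exp (-(t - t0)) :=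
      mul_nonneg (norm_nonneg x0) (Real.exp_nonneg _)
    simp only [hβdef]
    linarith
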